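/- If γ = [n 3^{-r}, (n+1) 3^{-r}) × {ρ} is a horizontal segment in S¹ × [0,1], then f^r(γ) is the graph of a function Z: [0,1) → [0,1] whose derivative satisfies |Z'(x)| ≤ π/10 for all x. -/

import Mathlib

open Real Set

noncomputable def kanMap (p : ℝ × ℝ) : ℝ × ℝ :=
  (Int.fract (3 * p.1), p.2 + Real.cos (2 * π * p.1) * (p.2 / 32) * (1 - p.2))

/-- Second coordinate of the `k`-th iterate, as a function of the initial angle. -/
noncomputable def kanZ (ρ : ℝ) : ℕ → ℝ → ℝ
  | 0 => fun _ => ρ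
  | k + 1 => fun x => kanZ ρ k x +
      Real.cos (2 * π * (3 ^ k * x)) * (kanZ ρ k x / 32) * (1 - kanZ ρ k x)

lemma kanZ_mem {ρ : ℝ} (hρ : ρ ∈ Set.Icc (0:ℝ) 1) (k : ℕ) (x : ℝ) :
    kanZ ρ k x ∈ Set.Icc (0:ℝ) 1 := by
  induction k with
  | zero => simpa [kanZ] using hρ
  | succ k ih =>
      obtain ⟨h0, h1⟩ := ih
      have hc : |Real.cos (2 * π * (3 ^ k * x))| ≤ 1 := Real.abs_cos_le_one _
      obtain ⟨hc1, hc2⟩ := abs_le.mp hc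
      constructor <;> simp only [kanZ] <;> nlinarith [mul_nonneg h0 (sub_nonneg.mpr h1)]

lemma kanZ_deriv {ρ : ℝ} (hρ : ρ ∈ Set.Icc (0:ℝ) 1) (k : ℕ) (x : ℝ) :
    ∃ d, HasDerivAt (kanZ ρ k) d x ∧ |d| ≤ π / 10 * 3 ^ k := by
  induction k with
  | zero =>
      exact ⟨0, hasDerivAt_const x ρ, by simp; positivity⟩
  | succ k ih =>
      obtain ⟨d, hd, hdb⟩ := ih
      set z := kanZ ρ k x with hz
      set c := Real.cos (2 * π * (3 ^ k * x)) with hcdef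
      set s := Real.sin (2 * π * (3 ^ k * x)) with hsdef
      have hu : HasDerivAt (fun x : ℝ => 2 * π * (3 ^ k * x)) (2 * π * 3 ^ k) x := by
        simpa [mul_assoc] using (hasDerivAt_id x).const_mul (2 * π * (3:ℝ) ^ k)
      have hcos : HasDerivAt (fun x : ℝ => Real.cos (2 * π * (3 ^ k * x)))
          (-s * (2 * π * 3 ^ k)) x := (Real.hasDerivAt_cos _).comp x hu
      have hsum : HasDerivAt (kanZ ρ (k + 1))
          (d + ((-s * (2 * π * 3 ^ k) * (z / 32) + c * (d / 32)) * (1 - z) +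
            c * (z / 32) * (0 - d))) x := by
        have := hd.add (((hcos.mul (hd.div_const 32)).mul
          ((hasDerivAt_const x (1:ℝ)).sub hd)))
        exact this.congr_deriv rfl
      refine ⟨_, hsum, ?_⟩
      obtain ⟨hz0, hz1⟩ := kanZ_mem hρ k x
      have hs : |s| ≤ 1 := Real.abs_sin_le_one _
      have hc : |c| ≤ 1 := Real.abs_cos_le_one _
      have hπ : (0:ℝ) < π := Real.pi_pos
      have h3 : (1:ℝ) ≤ 3 ^ k := one_le_pow₀ (by norm_num)
      have h3p : (0:ℝ) < 3 ^ k := by positivity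
      have hw0 : 0 ≤ z * (1 - z) := mul_nonneg hz0 (by linarith)
      have hw4 : z * (1 - z) ≤ 1 / 4 := by nlinarith [sq_nonneg (z - 1 / 2)]
      have hA : |s * (z * (1 - z))| ≤ 1 / 4 := by
        rw [abs_mul, abs_of_nonneg hw0]
        calc |s| * (z * (1 - z)) ≤ 1 * (1 / 4) :=
              mul_le_mul hs hw4 hw0 zero_le_one
          _ = 1 / 4 := by norm_num
      have h1z : |1 - z| ≤ 1 := abs_le.mpr ⟨by linarith, by linarith⟩
      have hzz : |z| ≤ 1 := abs_le.mpr ⟨by linarith, by linarith⟩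
      have hB : |c * (d * (1 - z))| ≤ π / 10 * 3 ^ k := by
        rw [abs_mul, abs_mul]
        calc |c| * (|d| * |1 - z|) ≤ 1 * (π / 10 * 3 ^ k * 1) := by
              apply mul_le_mul hc (mul_le_mul hdb h1z (abs_nonneg _) (by positivity))
                (by positivity) zero_le_one
          _ = π / 10 * 3 ^ k := by ring
      have hC : |c * (z * d)| ≤ π / 10 * 3 ^ k := by
        rw [abs_mul, abs_mul]
        calc |c| * (|z| * |d|) ≤ 1 * (1 * (π / 10 * 3 ^ k)) := by
              apply mul_le_mul hc (mul_le_mul hzz hdb (abs_nonneg _) zero_le_one)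
                (by positivity) zero_le_one
          _ = π / 10 * 3 ^ k := by ring
      have hrw : d + ((-s * (2 * π * 3 ^ k) * (z / 32) + c * (d / 32)) * (1 - z) +
            c * (z / 32) * (0 - d))
          = d + (-(s * (z * (1 - z)) * (2 * π * 3 ^ k)) + c * (d * (1 - z)) +
            -(c * (z * d))) / 32 := by ring
      rw [hrw]
      have hT : |s * (z * (1 - z)) * (2 * π * 3 ^ k)| ≤ 1 / 4 * (2 * π * 3 ^ k) := by
        rw [abs_mul]
        have : |2 * π * 3 ^ k| = 2 * π * 3 ^ k := abs_of_pos (by positivity)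
        rw [this]
        exact mul_le_mul_of_nonneg_right hA (by positivity)
      have hE : |(-(s * (z * (1 - z)) * (2 * π * 3 ^ k)) + c * (d * (1 - z)) +
          -(c * (z * d)))| ≤ 1 / 4 * (2 * π * 3 ^ k) + π / 10 * 3 ^ k +
          π / 10 * 3 ^ k := by
        refine (abs_add_three _ _ _).trans ?_
        rw [abs_neg, abs_neg]
        exact add_le_add (add_le_add hT hB) hC
      have habs : |d + (-(s * (z * (1 - z)) * (2 * π * 3 ^ k)) + c * (d * (1 - z)) +
          -(c * (z * d))) / 32| ≤ |d| + |(-(s * (z * (1 - z)) * (2 * π * 3 ^ k)) +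
          c * (d * (1 - z)) + -(c * (z * d)))| / 32 := by
        refine (abs_add_le _ _).trans ?_
        rw [abs_div, abs_of_pos (by norm_num : (0:ℝ) < 32)]
      refine habs.trans ?_
      rw [pow_succ]
      nlinarith [mul_pos hπ h3p, hE, hdb]

lemma kanMap_iterate (ρ : ℝ) (r : ℕ) (x : ℝ) (hx : x ∈ Set.Ico (0:ℝ) 1) :
    kanMap^[r] (x, ρ) = (Int.fract (3 ^ r * x), kanZ ρ r x) := by
  induction r with
  | zero =>
      simp [kanZ, Int.fract_eq_self.mpr ⟨hx.1, hx.2⟩]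
  | succ r ih =>
      rw [Function.iterate_succ_apply', ih]
      have h1 : Int.fract (3 * Int.fract (3 ^ r * x)) = Int.fract (3 ^ (r+1) * x) := by
        have h : 3 * Int.fract (3 ^ r * x)
            = 3 ^ (r+1) * x - ((3 * ⌊(3:ℝ) ^ r * x⌋ : ℤ) : ℝ) := by
          rw [Int.fract]; push_cast; ring
        rw [h, Int.fract_sub_intCast]
      have h2 : Real.cos (2 * π * Int.fract (3 ^ r * x))
          = Real.cos (2 * π * (3 ^ r * x)) := by
        rw [Int.fract]
        have h : 2 * π * ((3:ℝ) ^ r * x - ⌊(3:ℝ) ^ r * x⌋)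
            = 2 * π * ((3:ℝ) ^ r * x) - ⌊(3:ℝ) ^ r * x⌋ * (2 * π) := by ring
        rw [h, Real.cos_sub_int_mul_two_pi]
      simp only [kanMap, kanZ, h1, h2]

theorem stmt_8 (r n : ℕ) (hn : n < 3 ^ r) (ρ : ℝ) (hρ : ρ ∈ Set.Icc (0:ℝ) 1) :
    ∃ Z : ℝ → ℝ, Differentiable ℝ Z ∧
      (∀ x ∈ Set.Ico (0:ℝ) 1, Z x ∈ Set.Icc (0:ℝ) 1) ∧
      (∀ x ∈ Set.Ico (0:ℝ) 1, |deriv Z x| ≤ π / 10) ∧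
      kanMap^[r] '' (Set.Ico ((n : ℝ) / 3 ^ r) ((n + 1 : ℝ) / 3 ^ r) ×ˢ {ρ}) =
        {p : ℝ × ℝ | p.1 ∈ Set.Ico (0:ℝ) 1 ∧ p.2 = Z p.1} := by
  have h3r : (0:ℝ) < 3 ^ r := by positivity
  have hnr : (n:ℝ) + 1 ≤ 3 ^ r := by exact_mod_cast Nat.succ_le_of_lt hn
  have key : ∀ y : ℝ, HasDerivAt (fun y => kanZ ρ r (((n:ℝ) + y) / 3 ^ r))
      (deriv (fun y => kanZ ρ r (((n:ℝ) + y) / 3 ^ r)) y) y ∧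
      |deriv (fun y => kanZ ρ r (((n:ℝ) + y) / 3 ^ r)) y| ≤ π / 10 := by
    intro y
    obtain ⟨d, hd, hdb⟩ := kanZ_deriv hρ r (((n:ℝ) + y) / 3 ^ r)
    have hu : HasDerivAt (fun y : ℝ => ((n:ℝ) + y) / 3 ^ r) ((3 ^ r)⁻¹ : ℝ) y := by
      simpa using ((hasDerivAt_id y).const_add (n:ℝ)).div_const ((3:ℝ) ^ r)
    have hcomp : HasDerivAt (fun y => kanZ ρ r (((n:ℝ) + y) / 3 ^ r))
        (d * (3 ^ r)⁻¹) y := hd.comp y hu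
    have hder : deriv (fun y => kanZ ρ r (((n:ℝ) + y) / 3 ^ r)) y = d * (3 ^ r)⁻¹ :=
      hcomp.deriv
    refine ⟨hder ▸ hcomp, ?_⟩
    rw [hder, abs_mul, abs_inv, abs_of_pos h3r]
    calc |d| * ((3:ℝ) ^ r)⁻¹ ≤ (π / 10 * 3 ^ r) * (3 ^ r)⁻¹ :=
          mul_le_mul_of_nonneg_right hdb (by positivity)
      _ = π / 10 := by rw [mul_assoc, mul_inv_cancel₀ (ne_of_gt h3r), mul_one]
  refine ⟨fun y => kanZ ρ r (((n:ℝ) + y) / 3 ^ r),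
    fun y => ((key y).1).differentiableAt, fun y _ => kanZ_mem hρ r _,
    fun y _ => (key y).2, ?_⟩
  ext p
  simp only [Set.mem_image, Set.mem_prod, Set.mem_singleton_iff, Set.mem_setOf_eq]
  constructor
  · rintro ⟨⟨x, z⟩, ⟨hx, hzρ⟩, rfl⟩
    simp only at hx hzρ
    rw [show z = ρ from hzρ]
    obtain ⟨hx1, hx2⟩ := hx
    have hx1' : (n:ℝ) ≤ 3 ^ r * x := by
      rw [mul_comm]; exact (div_le_iff₀ h3r).mp hx1
    have hx2' : 3 ^ r * x < (n:ℝ) + 1 := by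
      rw [mul_comm]; exact (lt_div_iff₀ h3r).mp hx2
    have hx01 : x ∈ Set.Ico (0:ℝ) 1 := by
      constructor
      · have hnn : (0:ℝ) ≤ (n:ℝ) / 3 ^ r := by positivity
        linarith
      · calc x < ((n:ℝ) + 1) / 3 ^ r := hx2
          _ ≤ 1 := by rw [div_le_one h3r]; exact hnr
    rw [kanMap_iterate ρ r x hx01]
    have hfr : Int.fract (3 ^ r * x) = 3 ^ r * x - n := by
      have h : (3:ℝ) ^ r * x - (n:ℤ) = 3 ^ r * x - n := by push_cast; ring
      rw [← Int.fract_sub_intCast (3 ^ r * x) (n:ℤ), h,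
        Int.fract_eq_self.mpr ⟨by linarith, by linarith⟩]
    simp only [hfr]
    refine ⟨⟨by linarith, by linarith⟩, ?_⟩
    have h : ((n:ℝ) + (3 ^ r * x - n)) / 3 ^ r = x := by field_simp; ring
    rw [h]
  · rintro ⟨hy, hz⟩
    obtain ⟨y, z⟩ := p
    simp only at hy hz
    refine ⟨(((n:ℝ) + y) / 3 ^ r, ρ), ⟨⟨?_, ?_⟩, rfl⟩, ?_⟩
    · exact (div_le_div_iff_of_pos_right h3r).mpr (by linarith [hy.1])
    · rw [div_lt_div_iff₀ h3r h3r]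
      nlinarith [hy.2, h3r]
    · have hx01 : ((n:ℝ) + y) / 3 ^ r ∈ Set.Ico (0:ℝ) 1 := by
        constructor
        · have : (0:ℝ) ≤ (n:ℝ) + y := by linarith [hy.1, Nat.cast_nonneg (α := ℝ) n]
          positivity
        · rw [div_lt_one h3r]; linarith [hy.2]
      rw [kanMap_iterate ρ r _ hx01]
      have h3 : (3:ℝ) ^ r * (((n:ℝ) + y) / 3 ^ r) = (n:ℝ) + y := by field_simp
      rw [h3]
      have hfr : Int.fract ((n:ℝ) + y) = y := by
        rw [← Int.fract_sub_intCast ((n:ℝ) + y) (n:ℤ)]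
        have h : (n:ℝ) + y - (n:ℤ) = y := by push_cast; ring
        rw [h, Int.fract_eq_self.mpr ⟨hy.1, hy.2⟩]
      rw [hfr, hz]
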